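/- For every even nonnegative integer m = 2k, the function φ(x) = H_{2k}(ix)·e^{x²/2} (which is real-valued up to a constant factor) satisfies -φ'' + x²·φ = (-1 - 4k)·φ, and H_{2k}(ix) is a real multiple of a real polynomial in x² with no real zeros. -/

import Mathlib

/-- The physicists' Hermite polynomials: H₀ = 1, H₁ = 2x, H_{n+2} = 2x·H_{n+1} - 2(n+1)·H_n. -/
noncomputable def hermiteP : ℕ → Polynomial ℝ
  | 0 => 1
  | 1 => Polynomial.C 2 * Polynomial.X
  | (n + 2) => Polynomial.C 2 * Polynomial.X * hermiteP (n + 1)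
      - Polynomial.C (2 * ((n : ℝ) + 1)) * hermiteP n

open Polynomial

lemma hermiteP_deriv : ∀ n, derivative (hermiteP (n+1)) = C (2*((n:ℝ)+1)) * hermiteP n := by
  intro n
  induction n using Nat.twoStepInduction with
  | zero => simp [hermiteP]
  | one =>
    show derivative (hermiteP 2) = _
    rw [show (2:ℕ) = 0+2 from rfl, hermiteP]
    simp [hermiteP]
    ring
  | more n ih1 ih2 =>
    show derivative (hermiteP (n+3)) = _
    have ih2' : derivative (hermiteP (n+2)) = C (2*((n:ℝ)+2)) * hermiteP (n+1) := by
      rw [show n+2 = n+1+1 from rfl, ih2]; push_cast; ring_nf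
    have h3 : hermiteP (n+3) = Polynomial.C 2 * Polynomial.X * hermiteP (n + 2)
      - Polynomial.C (2 * ((n : ℝ) + 1 + 1)) * hermiteP (n+1) := by
      rw [show n+3 = n+1+2 from rfl, hermiteP]
      push_cast; ring_nf
    have h2 : hermiteP (n+2) = Polynomial.C 2 * Polynomial.X * hermiteP (n + 1)
      - Polynomial.C (2 * ((n : ℝ) + 1)) * hermiteP n := by rw [hermiteP]
    rw [h3]
    simp only [derivative_sub, derivative_mul, derivative_C, derivative_X, ih2', ih1]
    rw [h2]
    push_cast
    simp only [map_mul, map_add, map_one, map_ofNat]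
    ring

lemma hermiteP_rec2 : ∀ n, hermiteP (n+1) = C 2 * X * hermiteP n - derivative (hermiteP n) := by
  intro n
  cases n with
  | zero => simp [hermiteP]
  | succ m =>
    rw [hermiteP_deriv m, show m+1+1 = m+2 from rfl, hermiteP]

lemma hermiteP_ode (n : ℕ) :
    derivative (derivative (hermiteP n)) - C 2 * X * derivative (hermiteP n)
      + C (2*(n:ℝ)) * hermiteP n = 0 := by
  cases n with
  | zero => simp [hermiteP]
  | succ m =>
    rw [hermiteP_deriv m, derivative_mul, derivative_C, hermiteP_rec2 m]
    push_cast
    simp only [map_mul, map_add, map_one, map_ofNat]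
    ring

open Polynomial in
noncomputable def hpk : ℕ → Polynomial ℝ × Polynomial ℝ
  | 0 => (1, C 2)
  | (k+1) =>
      (C 2 * X * (hpk k).2 + C (2*(2*(k:ℝ)+1)) * (hpk k).1,
       C 2 * (C 2 * X * (hpk k).2 + C (2*(2*(k:ℝ)+1)) * (hpk k).1)
         + C (4*((k:ℝ)+1)) * (hpk k).2)

open Polynomial Complex in
lemma hermiteP_I_eval : ∀ k : ℕ, ∀ x : ℝ,
    (Polynomial.aeval (Complex.I * (x:ℂ)) (hermiteP (2*k))
        = (((-1:ℝ)^k * (hpk k).1.eval (x^2) : ℝ) : ℂ)) ∧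
    (Polynomial.aeval (Complex.I * (x:ℂ)) (hermiteP (2*k+1))
        = Complex.I * (((-1:ℝ)^k * x * (hpk k).2.eval (x^2) : ℝ) : ℂ)) := by
  intro k
  induction k with
  | zero => intro x; simp [hermiteP, hpk]; ring
  | succ k ih =>
    intro x
    obtain ⟨h1, h2⟩ := ih x
    have e1 : hermiteP (2*(k+1)) = Polynomial.C 2 * Polynomial.X * hermiteP (2*k+1)
        - Polynomial.C (2 * ((2*k : ℕ) + 1 : ℝ)) * hermiteP (2*k) := by
      rw [show 2*(k+1) = 2*k+2 from by ring, hermiteP]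
      try push_cast
      try ring_nf
    have e2 : hermiteP (2*(k+1)+1) = Polynomial.C 2 * Polynomial.X * hermiteP (2*(k+1))
        - Polynomial.C (2 * ((2*k+1 : ℕ) + 1 : ℝ)) * hermiteP (2*k+1) := by
      rw [show 2*(k+1)+1 = (2*k+1)+2 from by ring, hermiteP]
      try push_cast
      try ring_nf
    constructor
    · rw [e1]
      simp only [map_sub, map_mul, aeval_X, aeval_C, h1, h2, hpk]
      simp only [eval_add, eval_mul, eval_C, eval_X, algebraMap_eq]
      push_cast
      ring_nf
      rw [show (Complex.I)^2 = -1 from Complex.I_sq]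
      ring
    · rw [e2, e1]
      simp only [map_sub, map_mul, aeval_X, aeval_C, h1, h2, hpk]
      simp only [eval_add, eval_mul, eval_C, eval_X, algebraMap_eq]
      push_cast
      ring_nf
      rw [show (Complex.I)^3 = -Complex.I from by
        rw [pow_succ, Complex.I_sq]; ring]
      ring

lemma hpk_pos : ∀ k : ℕ, ∀ t : ℝ, 0 ≤ t →
    0 < (hpk k).1.eval t ∧ 0 < (hpk k).2.eval t := by
  intro k
  induction k with
  | zero => intro t ht; simp [hpk]
  | succ k ih =>
    intro t ht
    obtain ⟨i1, i2⟩ := ih t ht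
    have : (0:ℝ) < 2*(2*(k:ℝ)+1) := by positivity
    constructor
    · simp only [hpk, Polynomial.eval_add, Polynomial.eval_mul, Polynomial.eval_C,
        Polynomial.eval_X]
      nlinarith
    · simp only [hpk, Polynomial.eval_add, Polynomial.eval_mul, Polynomial.eval_C,
        Polynomial.eval_X]
      nlinarith

open Polynomial Complex in
lemma hasDerivAt_poly_exp (Q : Polynomial ℂ) (x : ℝ) :
    HasDerivAt (fun x : ℝ => Q.eval (Complex.I * (x:ℂ)) * Complex.exp ((x:ℂ)^2/2))
      ((C Complex.I * derivative Q - C Complex.I * X * Q).eval (Complex.I * (x:ℂ))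
        * Complex.exp ((x:ℂ)^2/2)) x := by
  have hq : ∀ z : ℂ, HasDerivAt (fun z : ℂ => Q.eval (Complex.I * z))
      (Q.derivative.eval (Complex.I * z) * Complex.I) z := fun z =>
    (Q.hasDerivAt (Complex.I * z)).comp z (by simpa using (hasDerivAt_id z).const_mul Complex.I)
  have he : ∀ z : ℂ, HasDerivAt (fun z : ℂ => Complex.exp (z^2/2))
      (Complex.exp (z^2/2) * z) z := fun z => by
    have h1 : HasDerivAt (fun z : ℂ => z^2/2) ((2 * z^1)/2) z := (hasDerivAt_pow 2 z).div_const 2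
    simpa [Function.comp_def] using (Complex.hasDerivAt_exp (z^2/2)).comp z h1
  have := HasDerivAt.comp_ofReal (z := x) ((hq (x:ℂ)).mul (he (x:ℂ)))
  convert this using 1
  · rfl
  simp only [eval_sub, eval_mul, eval_C, eval_X]
  ring_nf
  rw [show (Complex.I)^2 = -1 from Complex.I_sq]
  ring

open Polynomial Complex in
lemma deriv_poly_exp (Q : Polynomial ℂ) :
    deriv (fun x : ℝ => Q.eval (Complex.I * (x:ℂ)) * Complex.exp ((x:ℂ)^2/2))
      = fun x : ℝ => (C Complex.I * derivative Q - C Complex.I * X * Q).eval (Complex.I * (x:ℂ))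
          * Complex.exp ((x:ℂ)^2/2) :=
  funext fun x => (hasDerivAt_poly_exp Q x).deriv

open Polynomial Complex in
/-- for m = 2k even, φ(x) = H_{2k}(ix)·e^{x²/2} satisfies
-φ'' + x²·φ = (-1-4k)·φ, and H_{2k}(ix) = (-1)^k·h(x²) for a real polynomial h with
no zeros at nonnegative reals (so H_{2k}(ix) has no real zeros). -/
theorem hermite_imaginary_factorization_function (k : ℕ)
    (φ : ℝ → ℂ)
    (hφ : φ = fun x : ℝ =>
      Polynomial.aeval (Complex.I * (x : ℂ)) (hermiteP (2 * k)) * Complex.exp ((x : ℂ) ^ 2 / 2)) :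
    (∀ x : ℝ, -(deriv (deriv φ) x) + ((x : ℂ) ^ 2) * φ x = ((-1 - 4 * (k : ℝ) : ℝ) : ℂ) * φ x) ∧
    (∃ h : Polynomial ℝ,
      (∀ x : ℝ, Polynomial.aeval (Complex.I * (x : ℂ)) (hermiteP (2 * k))
          = (((-1 : ℝ) ^ k * h.eval (x ^ 2) : ℝ) : ℂ)) ∧
      (∀ x : ℝ, h.eval (x ^ 2) ≠ 0)) := by
  constructor
  · set Q₀ : Polynomial ℂ := (hermiteP (2*k)).map (algebraMap ℝ ℂ) with hQ₀
    have hφ' : φ = fun x : ℝ => Q₀.eval (Complex.I * (x:ℂ)) * Complex.exp ((x:ℂ)^2/2) := by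
      rw [hφ]; funext y; rw [hQ₀, Polynomial.eval_map, Polynomial.aeval_def]
    have ode : derivative (derivative Q₀) - C 2 * (X * derivative Q₀)
        + C 2 * (C 2 * (((k:ℕ) : Polynomial ℂ) * Q₀)) = 0 := by
      have h0 := congrArg (Polynomial.map (algebraMap ℝ ℂ)) (hermiteP_ode (2*k))
      simpa [← Polynomial.derivative_map, Polynomial.map_sub, Polynomial.map_add,
        Polynomial.map_mul, Polynomial.map_ofNat, map_C, map_X, mul_assoc] using h0
    intro x
    rw [hφ', deriv_poly_exp, deriv_poly_exp]
    have hode := congrArg (Polynomial.eval (Complex.I * (x:ℂ))) ode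
    simp only [eval_add, eval_sub, eval_mul, eval_C, eval_X, eval_zero] at hode
    simp only [derivative_sub, derivative_mul, derivative_C, derivative_X, eval_add, eval_sub,
      eval_mul, eval_C, eval_X, eval_one, zero_mul, one_mul, mul_zero, zero_add, add_zero]
    push_cast
    simp only [Polynomial.eval_natCast] at hode
    linear_combination (-(Complex.I^2) * Complex.exp ((x:ℂ)^2/2)) * hode
      + ((1 + 4*(k:ℂ) - (x:ℂ)^2*(Complex.I^2 - 1)) * Polynomial.eval (Complex.I*(x:ℂ)) Q₀
          * Complex.exp ((x:ℂ)^2/2)) * Complex.I_sq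
  · exact ⟨(hpk k).1, fun x => (hermiteP_I_eval k x).1,
      fun x => ne_of_gt (hpk_pos k _ (sq_nonneg x)).1⟩
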